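/- Let H = (V,E,w) be an edge-weighted hypergraph and let S_1, …, S_k be pairwise disjoint nonempty subsets of V. Then max_{i ∈ [k]} φ(S_i) ≥ ζ_k/2. -/

import Mathlib

open Finset

/-- An edge-weighted hypergraph on a finite vertex set `V`: a finite set of hyperedges,
each a nonempty subset of `V`, with positive weights. -/
structure WHypergraph (V : Type*) [Fintype V] [DecidableEq V] where
  E : Finset (Finset V)
  w : Finset V → ℝ
  edge_nonempty : ∀ e ∈ E, e.Nonempty
  w_pos : ∀ e ∈ E, 0 < w e

namespace WHypergraph

variable {V : Type*} [Fintype V] [DecidableEq V]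

/-- The weight of a vertex: total weight of hyperedges containing it. -/
noncomputable def wv (H : WHypergraph V) (v : V) : ℝ :=
  ∑ e ∈ H.E.filter (fun e => v ∈ e), H.w e

/-- The weight of a set of vertices. -/
noncomputable def wS (H : WHypergraph V) (S : Finset V) : ℝ := ∑ v ∈ S, H.wv v

/-- The boundary of `S`: hyperedges meeting both `S` and its complement. -/
noncomputable def bdry (H : WHypergraph V) (S : Finset V) : Finset (Finset V) :=
  H.E.filter (fun e => (e ∩ S).Nonempty ∧ (e \ S).Nonempty)

/-- The expansion `φ(S)` of a set of vertices. -/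
noncomputable def phi (H : WHypergraph V) (S : Finset V) : ℝ :=
  (∑ e ∈ H.bdry S, H.w e) / H.wS S

/-- `max_{u,v ∈ e} (f u - f v)^2`. -/
noncomputable def edgeDisc (H : WHypergraph V) (f : V → ℝ) (e : Finset V) : ℝ :=
  sSup {x : ℝ | ∃ u ∈ e, ∃ v ∈ e, (f u - f v) ^ 2 = x}

/-- The discrepancy ratio `D_w(f)`. -/
noncomputable def disc (H : WHypergraph V) (f : V → ℝ) : ℝ :=
  (∑ e ∈ H.E, H.w e * H.edgeDisc f e) / ∑ u : V, H.wv u * f u ^ 2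

/-- The weighted inner product `⟨f,g⟩_w`. -/
noncomputable def wip (H : WHypergraph V) (f g : V → ℝ) : ℝ :=
  ∑ u : V, H.wv u * f u * g u

/-- `γ₂`: infimum of the discrepancy ratio over nonzero `f ⊥_w 1`. -/
noncomputable def gamma2 (H : WHypergraph V) : ℝ :=
  sInf {x : ℝ | ∃ f : V → ℝ, f ≠ 0 ∧ H.wip f (fun _ => 1) = 0 ∧ H.disc f = x}

/-- The hypergraph expansion `φ_H`. -/
noncomputable def phiH (H : WHypergraph V) : ℝ :=
  sInf {x : ℝ | ∃ S : Finset V, S.Nonempty ∧ S ≠ univ ∧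
    x = max (H.phi S) (H.phi Sᶜ)}

/-- `ζ_k`: inf over `k`-tuples of nonzero pairwise `w`-orthogonal vectors of the
sup of the discrepancy ratio over nonzero vectors in their span. -/
noncomputable def zeta (H : WHypergraph V) (k : ℕ) : ℝ :=
  sInf {x : ℝ | ∃ f : Fin k → V → ℝ, (∀ i, f i ≠ 0) ∧
    (∀ i j, i ≠ j → H.wip (f i) (f j) = 0) ∧
    x = sSup {y : ℝ | ∃ h : V → ℝ, h ≠ 0 ∧
      h ∈ Submodule.span ℝ (Set.range f) ∧ H.disc h = y}}

/-- `ξ_k`: inf over `k`-tuples of nonzero pairwise `w`-orthogonal vectors of the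
maximum discrepancy ratio among them. -/
noncomputable def xi (H : WHypergraph V) (k : ℕ) : ℝ :=
  sInf {x : ℝ | ∃ f : Fin k → V → ℝ, (∀ i, f i ≠ 0) ∧
    (∀ i j, i ≠ j → H.wip (f i) (f j) = 0) ∧
    x = sSup {y : ℝ | ∃ i, H.disc (f i) = y}}

/-- A sequence of procedural minimizers: `f 0` is a nonzero constant vector, each `f i`
is nonzero and `w`-orthogonal to the previous ones, and attains the infimum of the
discrepancy ratio over nonzero vectors `w`-orthogonal to the previous ones. -/
def IsProcMin (H : WHypergraph V) {k : ℕ} (f : Fin k → V → ℝ) : Prop :=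
  (∀ i, f i ≠ 0) ∧
  (∀ i : Fin k, (i : ℕ) = 0 → ∃ c : ℝ, f i = fun _ => c) ∧
  (∀ i j : Fin k, (j : ℕ) < (i : ℕ) → H.wip (f i) (f j) = 0) ∧
  (∀ i : Fin k, 0 < (i : ℕ) → H.disc (f i) =
    sInf {x : ℝ | ∃ g : V → ℝ, g ≠ 0 ∧
      (∀ j : Fin k, (j : ℕ) < (i : ℕ) → H.wip g (f j) = 0) ∧ H.disc g = x})

end WHypergraph

set_option maxHeartbeats 2000000 in
/-- For pairwise disjoint nonempty sets `S_1, …, S_k`, `max_i φ(S_i) ≥ ζ_k / 2`. -/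
theorem disjoint_sets_expansion_ge_zeta {V : Type*} [Fintype V] [DecidableEq V]
    (H : WHypergraph V) (hw : ∀ v : V, 0 < H.wv v) (k : ℕ) (hk : 0 < k)
    (S : Fin k → Finset V) (hne : ∀ i, (S i).Nonempty)
    (hdisj : ∀ i j, i ≠ j → Disjoint (S i) (S j)) :
    H.zeta k / 2 ≤
      Finset.univ.sup' (Finset.univ_nonempty_iff.mpr ⟨⟨0, hk⟩⟩)
        (fun i => H.phi (S i)) := by

  classical
  set M := Finset.univ.sup' (Finset.univ_nonempty_iff.mpr ⟨⟨0, hk⟩⟩)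
      (fun i => H.phi (S i)) with hMdef
  have hwv_nonneg : ∀ v, 0 ≤ H.wv v := fun v => (hw v).le
  have hwS_pos : ∀ i, 0 < H.wS (S i) := fun i =>
    Finset.sum_pos (fun v _ => hw v) (hne i)
  have hbdry_nonneg : ∀ T : Finset V, 0 ≤ ∑ e ∈ H.bdry T, H.w e := fun T =>
    Finset.sum_nonneg fun e he => (H.w_pos e (Finset.mem_filter.mp he).1).le
  have hphi_nonneg : ∀ i, 0 ≤ H.phi (S i) := fun i =>
    div_nonneg (hbdry_nonneg _) (hwS_pos i).le
  have hM_nonneg : 0 ≤ M := by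
    rw [hMdef]
    exact (Finset.le_sup'_iff (Finset.univ_nonempty_iff.mpr ⟨⟨0, hk⟩⟩)).mpr
      ⟨⟨0, hk⟩, Finset.mem_univ _, hphi_nonneg _⟩
  have hphi_le : ∀ i, H.phi (S i) ≤ M := by
    intro i
    rw [hMdef]
    exact (Finset.le_sup'_iff (Finset.univ_nonempty_iff.mpr ⟨⟨0, hk⟩⟩)).mpr
      ⟨i, Finset.mem_univ i, le_refl _⟩
  have hbdry_le : ∀ i, ∑ e ∈ H.bdry (S i), H.w e ≤ M * H.wS (S i) := by
    intro i
    have := hphi_le i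
    rw [WHypergraph.phi, div_le_iff₀ (hwS_pos i)] at this
    exact this
  -- indicator family
  set f : Fin k → V → ℝ := fun i v => if v ∈ S i then 1 else 0 with hfdef
  have hf_ne : ∀ i, f i ≠ 0 := by
    intro i h0
    obtain ⟨v, hv⟩ := hne i
    have := congrFun h0 v
    simp [hfdef, hv] at this
  have hf_orth : ∀ i j, i ≠ j → H.wip (f i) (f j) = 0 := by
    intro i j hij
    apply Finset.sum_eq_zero
    intro u _
    simp only [hfdef]
    by_cases hu : u ∈ S i
    · have : u ∉ S j := Finset.disjoint_left.mp (hdisj i j hij) hu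
      simp [hu, this]
    · simp [hu]
  have hdisc_nonneg : ∀ g : V → ℝ, 0 ≤ H.disc g := by
    intro g
    apply div_nonneg
    · apply Finset.sum_nonneg
      intro e he
      refine mul_nonneg (H.w_pos e he).le (Real.sSup_nonneg ?_)
      rintro x ⟨u, hu, v, hv, rfl⟩
      positivity
    · exact Finset.sum_nonneg fun u _ => mul_nonneg (hwv_nonneg u) (sq_nonneg _)
  -- key bound for elements of the span
  have key : ∀ h : V → ℝ, h ≠ 0 → h ∈ Submodule.span ℝ (Set.range f) →
      H.disc h ≤ 2 * M := by
    intro h hh hmem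
    rw [Submodule.mem_span_range_iff_exists_fun] at hmem
    obtain ⟨c, hc⟩ := hmem
    have hval : ∀ i : Fin k, ∀ v ∈ S i, h v = c i := by
      intro i v hv
      have := congrFun hc v
      rw [Finset.sum_apply] at this
      rw [← this]
      rw [Finset.sum_eq_single i]
      · simp [hfdef, hv]
      · intro j _ hji
        have : v ∉ S j := Finset.disjoint_left.mp (hdisj i j hji.symm) hv
        simp [hfdef, this]
      · intro habs; exact absurd (Finset.mem_univ i) habs
    have hval0 : ∀ v : V, (∀ i, v ∉ S i) → h v = 0 := by
      intro v hv
      have := congrFun hc v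
      rw [Finset.sum_apply] at this
      rw [← this]
      apply Finset.sum_eq_zero
      intro j _
      simp [hfdef, hv j]
    set D := ∑ u : V, H.wv u * h u ^ 2 with hDdef
    have hD_pos : 0 < D := by
      obtain ⟨u, hu⟩ := Function.ne_iff.mp hh
      apply Finset.sum_pos' (fun v _ => mul_nonneg (hwv_nonneg v) (sq_nonneg _))
      exact ⟨u, Finset.mem_univ u, mul_pos (hw u) (sq_pos_of_ne_zero hu)⟩
    have hDlow : ∑ i : Fin k, c i ^ 2 * H.wS (S i) ≤ D := by
      have h1 : ∀ i : Fin k, c i ^ 2 * H.wS (S i) = ∑ u ∈ S i, H.wv u * h u ^ 2 := by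
        intro i
        rw [WHypergraph.wS, Finset.mul_sum]
        apply Finset.sum_congr rfl
        intro u hu
        rw [hval i u hu]; ring
      calc ∑ i : Fin k, c i ^ 2 * H.wS (S i)
          = ∑ i : Fin k, ∑ u ∈ S i, H.wv u * h u ^ 2 := by
            exact Finset.sum_congr rfl fun i _ => h1 i
        _ = ∑ u ∈ Finset.univ.biUnion S, H.wv u * h u ^ 2 :=
            (Finset.sum_biUnion fun i _ j _ hij => hdisj i j hij).symm
        _ ≤ D := Finset.sum_le_sum_of_subset_of_nonneg (Finset.subset_univ _)
            (fun u _ _ => mul_nonneg (hwv_nonneg u) (sq_nonneg _))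
    -- per-edge bound
    have hedge : ∀ e ∈ H.E, H.edgeDisc h e ≤
        2 * ∑ i ∈ Finset.univ.filter (fun i => e ∈ H.bdry (S i)), c i ^ 2 := by
      intro e he
      set T := Finset.univ.filter (fun i => e ∈ H.bdry (S i)) with hTdef
      have hT_nonneg : 0 ≤ ∑ i ∈ T, c i ^ 2 :=
        Finset.sum_nonneg fun i _ => sq_nonneg _
      have hmemT : ∀ (i : Fin k) (u v : V), u ∈ e → u ∈ S i → v ∈ e → v ∉ S i →
          i ∈ T := by
        intro i u v hu hui hv hvi
        rw [hTdef, Finset.mem_filter]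
        refine ⟨Finset.mem_univ i, ?_⟩
        rw [WHypergraph.bdry, Finset.mem_filter]
        exact ⟨he, ⟨u, Finset.mem_inter.mpr ⟨hu, hui⟩⟩,
          ⟨v, Finset.mem_sdiff.mpr ⟨hv, hvi⟩⟩⟩
      have hsingle : ∀ i ∈ T, c i ^ 2 ≤ ∑ j ∈ T, c j ^ 2 := fun i hi =>
        Finset.single_le_sum (fun j _ => sq_nonneg (c j)) hi
      apply Real.sSup_le _ (by linarith)
      rintro x ⟨u, hu, v, hv, rfl⟩
      by_cases hu' : ∃ i, u ∈ S i
      · obtain ⟨i, hui⟩ := hu'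
        by_cases hv' : ∃ j, v ∈ S j
        · obtain ⟨j, hvj⟩ := hv'
          by_cases hij : i = j
          · subst hij
            rw [hval i u hui, hval i v hvj, sub_self]
            simpa using (by linarith : (0:ℝ) ≤ 2 * ∑ i ∈ T, c i ^ 2)
          · have hvi : v ∉ S i := Finset.disjoint_left.mp (hdisj j i (Ne.symm hij)) hvj
            have huj : u ∉ S j := Finset.disjoint_left.mp (hdisj i j hij) hui
            have hiT : i ∈ T := hmemT i u v hu hui hv hvi
            have hjT : j ∈ T := hmemT j v u hv hvj hu huj
            have hpair : c i ^ 2 + c j ^ 2 ≤ ∑ l ∈ T, c l ^ 2 := by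
              have hsub : ({i, j} : Finset (Fin k)) ⊆ T := by
                intro l hl
                rcases Finset.mem_insert.mp hl with rfl | hl
                · exact hiT
                · rw [Finset.mem_singleton] at hl; subst hl; exact hjT
              calc c i ^ 2 + c j ^ 2 = ∑ l ∈ ({i, j} : Finset (Fin k)), c l ^ 2 := by
                    rw [Finset.sum_pair hij]
                _ ≤ ∑ l ∈ T, c l ^ 2 :=
                    Finset.sum_le_sum_of_subset_of_nonneg hsub
                      (fun l _ _ => sq_nonneg _)
            rw [hval i u hui, hval j v hvj]
            nlinarith [sq_nonneg (c i + c j)]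
        · push_neg at hv'
          have hvi : v ∉ S i := hv' i
          have hiT : i ∈ T := hmemT i u v hu hui hv hvi
          rw [hval i u hui, hval0 v hv', sub_zero]
          nlinarith [hsingle i hiT]
      · push_neg at hu'
        by_cases hv' : ∃ j, v ∈ S j
        · obtain ⟨j, hvj⟩ := hv'
          have huj : u ∉ S j := hu' j
          have hjT : j ∈ T := hmemT j v u hv hvj hu huj
          rw [hval0 u hu', hval j v hvj, zero_sub]
          nlinarith [hsingle j hjT]
        · push_neg at hv'
          rw [hval0 u hu', hval0 v hv', sub_self]
          simpa using (by linarith : (0:ℝ) ≤ 2 * ∑ i ∈ T, c i ^ 2)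
    -- numerator bound
    have hN : ∑ e ∈ H.E, H.w e * H.edgeDisc h e ≤ 2 * M * D := by
      have step1 : ∑ e ∈ H.E, H.w e * H.edgeDisc h e ≤
          ∑ e ∈ H.E, H.w e *
            (2 * ∑ i ∈ Finset.univ.filter (fun i => e ∈ H.bdry (S i)), c i ^ 2) := by
        apply Finset.sum_le_sum
        intro e he
        exact mul_le_mul_of_nonneg_left (hedge e he) (H.w_pos e he).le
      have step2 : ∑ e ∈ H.E, H.w e *
            (2 * ∑ i ∈ Finset.univ.filter (fun i => e ∈ H.bdry (S i)), c i ^ 2) =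
          2 * ∑ i : Fin k, c i ^ 2 * ∑ e ∈ H.bdry (S i), H.w e := by
        have hsub : ∀ i : Fin k, H.bdry (S i) ⊆ H.E := fun i =>
          Finset.filter_subset _ _
        calc ∑ e ∈ H.E, H.w e *
              (2 * ∑ i ∈ Finset.univ.filter (fun i => e ∈ H.bdry (S i)), c i ^ 2)
            = 2 * ∑ e ∈ H.E, ∑ i : Fin k,
                (if e ∈ H.bdry (S i) then H.w e * c i ^ 2 else 0) := by
              rw [Finset.mul_sum]
              apply Finset.sum_congr rfl
              intro e _
              rw [Finset.sum_filter, Finset.mul_sum, Finset.mul_sum,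
                Finset.mul_sum]
              apply Finset.sum_congr rfl
              intro i _
              by_cases hi : e ∈ H.bdry (S i) <;> simp [hi] <;> ring
          _ = 2 * ∑ i : Fin k, ∑ e ∈ H.E,
                (if e ∈ H.bdry (S i) then H.w e * c i ^ 2 else 0) := by
              rw [Finset.sum_comm]
          _ = 2 * ∑ i : Fin k, c i ^ 2 * ∑ e ∈ H.bdry (S i), H.w e := by
              congr 1
              apply Finset.sum_congr rfl
              intro i _
              rw [← Finset.sum_filter]
              have heq : H.E.filter (fun e => e ∈ H.bdry (S i)) = H.bdry (S i) := by
                apply Finset.Subset.antisymm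
                · intro e he
                  exact (Finset.mem_filter.mp he).2
                · intro e he
                  exact Finset.mem_filter.mpr ⟨hsub i he, he⟩
              rw [heq, Finset.mul_sum]
              apply Finset.sum_congr rfl
              intro e _
              ring
      have step3 : 2 * ∑ i : Fin k, c i ^ 2 * ∑ e ∈ H.bdry (S i), H.w e ≤
          2 * M * D := by
        have h1 : ∑ i : Fin k, c i ^ 2 * ∑ e ∈ H.bdry (S i), H.w e ≤
            ∑ i : Fin k, c i ^ 2 * (M * H.wS (S i)) := by
          apply Finset.sum_le_sum
          intro i _
          exact mul_le_mul_of_nonneg_left (hbdry_le i) (sq_nonneg _)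
        have h2 : ∑ i : Fin k, c i ^ 2 * (M * H.wS (S i)) =
            M * ∑ i : Fin k, c i ^ 2 * H.wS (S i) := by
          rw [Finset.mul_sum]
          apply Finset.sum_congr rfl
          intro i _; ring
        have h3 : M * ∑ i : Fin k, c i ^ 2 * H.wS (S i) ≤ M * D :=
          mul_le_mul_of_nonneg_left hDlow hM_nonneg
        nlinarith
      calc ∑ e ∈ H.E, H.w e * H.edgeDisc h e ≤ _ := step1
        _ = _ := step2
        _ ≤ 2 * M * D := step3
    rw [WHypergraph.disc, div_le_iff₀ hD_pos]
    exact hN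
  -- conclude via zeta
  have hz : H.zeta k ≤ 2 * M := by
    have hle : H.zeta k ≤ sSup {y : ℝ | ∃ h : V → ℝ, h ≠ 0 ∧
        h ∈ Submodule.span ℝ (Set.range f) ∧ H.disc h = y} := by
      apply csInf_le
      · refine ⟨0, ?_⟩
        rintro x ⟨g, _, _, rfl⟩
        apply Real.sSup_nonneg
        rintro y ⟨h2, _, _, rfl⟩
        exact hdisc_nonneg h2
      · exact ⟨f, hf_ne, hf_orth, rfl⟩
    have hsup : sSup {y : ℝ | ∃ h : V → ℝ, h ≠ 0 ∧
        h ∈ Submodule.span ℝ (Set.range f) ∧ H.disc h = y} ≤ 2 * M := by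
      apply Real.sSup_le _ (by linarith)
      rintro y ⟨h, hh, hmem, rfl⟩
      exact key h hh hmem
    linarith
  linarith
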